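/- Let B be a semisimple MV-algebra. For every semisimple DMV-algebra V and every homomorphism of MV-algebras f : B → U_δ(V) (where U_δ(V) is the MV-algebra reduct of V), there exists a unique homomorphism of DMV-algebras f̃ : [0,1]_ℚ ⊗ B → V such that f̃ ∘ ι_B = f, where ι_B : B → [0,1]_ℚ ⊗ B is the canonical embedding b ↦ 1 ⊗ b. -/

import Mathlib

/-- An MV-algebra: an abelian monoid `(A, ⊕, 0)` with an involution `*` satisfying
the Łukasiewicz axioms. -/
class MVAlgebra (A : Type) where
  oplus : A → A → A
  star : A → A
  zero : A
  oplus_assoc : ∀ x y z : A, oplus (oplus x y) z = oplus x (oplus y z)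
  oplus_comm : ∀ x y : A, oplus x y = oplus y x
  oplus_zero : ∀ x : A, oplus x zero = x
  star_star : ∀ x : A, star (star x) = x
  lukasiewicz : ∀ x y : A,
    oplus (star (oplus (star x) y)) y = oplus (star (oplus (star y) x)) x
  oplus_star_zero : ∀ x : A, oplus (star zero) x = star zero

namespace MVAlgebra

variable {A : Type} [MVAlgebra A]

/-- The top element `1 = 0*`. -/
def one : A := star zero

/-- The MV-product `x ⊙ y = (x* ⊕ y*)*`. -/
def odot (x y : A) : A := star (oplus (star x) (star y))

/-- `n`-fold ⊕-sum of an element. -/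
def nmul : ℕ → A → A
  | 0, _ => zero
  | n + 1, x => oplus (nmul n x) x

/-- The lattice join `x ∨ y = (x ⊙ y*) ⊕ y`. -/
def sup (x y : A) : A := oplus (odot x (star y)) y

/-- The lattice meet `x ∧ y = (x ⊕ y*) ⊙ y`. -/
def inf (x y : A) : A := odot (oplus x (star y)) y

/-- The MV-order: `x ≤ y` iff `x ⊙ y* = 0`. -/
def le (x y : A) : Prop := odot x (star y) = zero

end MVAlgebra

/-- The rational unit interval `[0,1] ∩ ℚ`. -/
def QI : Type := {q : ℚ // 0 ≤ q ∧ q ≤ 1}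

namespace QI

/-- Truncated addition on `[0,1] ∩ ℚ`. -/
def oplus (r s : QI) : QI :=
  ⟨min (r.1 + s.1) 1, le_min (add_nonneg r.2.1 s.2.1) zero_le_one, min_le_right _ _⟩

/-- Negation `r* = 1 - r` on `[0,1] ∩ ℚ`. -/
def star (r : QI) : QI :=
  ⟨1 - r.1, by constructor <;> [linarith [r.2.2]; linarith [r.2.1]]⟩

def zero : QI := ⟨0, le_refl 0, zero_le_one⟩

def one : QI := ⟨1, zero_le_one, le_refl 1⟩

/-- Ordinary multiplication of rationals, restricted to `[0,1] ∩ ℚ`. -/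
def mul (r s : QI) : QI :=
  ⟨r.1 * s.1, mul_nonneg r.2.1 s.2.1, by nlinarith [r.2.1, r.2.2, s.2.1, s.2.2]⟩

/-- The MV-product `r ⊙ s = (r* ⊕ s*)*` on `[0,1] ∩ ℚ`. -/
def odot (r s : QI) : QI := star (oplus (star r) (star s))

/-- Division by a natural number in `[0,1] ∩ ℚ`. -/
def div (r : QI) (n : ℕ) : QI :=
  ⟨r.1 / n, div_nonneg r.2.1 (Nat.cast_nonneg n), by
    rcases Nat.eq_zero_or_pos n with h | h
    · simp [h]
    · exact le_trans (div_le_self r.2.1 (by exact_mod_cast h)) r.2.2⟩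

/-- `1/n` as an element of `[0,1] ∩ ℚ` (with `1/0 = 0`). -/
def oneOver (n : ℕ) : QI := div one n

/-- Join (maximum) in `[0,1] ∩ ℚ`. -/
def sup (r s : QI) : QI :=
  ⟨max r.1 s.1, le_max_of_le_left r.2.1, max_le r.2.2 s.2.2⟩

/-- Meet (minimum) in `[0,1] ∩ ℚ`. -/
def inf (r s : QI) : QI :=
  ⟨min r.1 s.1, le_min r.2.1 s.2.1, min_le_of_left_le r.2.2⟩

end QI

/-- A DMV-algebra: an MV-algebra with division operators `δ_n` (`n ≥ 1`) satisfying
`n·δ_n x = x` and `δ_n x ⊙ (n-1)·δ_n x = 0`. -/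
class DMVAlgebra (A : Type) extends MVAlgebra A where
  delta : ℕ → A → A
  delta_nmul : ∀ n : ℕ, 1 ≤ n → ∀ x : A, MVAlgebra.nmul n (delta n x) = x
  delta_odot : ∀ n : ℕ, 1 ≤ n → ∀ x : A,
    MVAlgebra.odot (delta n x) (MVAlgebra.nmul (n - 1) (delta n x)) = MVAlgebra.zero

/-- Homomorphism of MV-algebras: preserves `⊕`, `*` and `0`. -/
def IsMVHom {A B : Type} [MVAlgebra A] [MVAlgebra B] (f : A → B) : Prop :=
  (∀ x y : A, f (MVAlgebra.oplus x y) = MVAlgebra.oplus (f x) (f y)) ∧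
  (∀ x : A, f (MVAlgebra.star x) = MVAlgebra.star (f x)) ∧
  f MVAlgebra.zero = MVAlgebra.zero

/-- Homomorphism of DMV-algebras: an MV-homomorphism preserving every `δ_n`. -/
def IsDMVHom {A B : Type} [DMVAlgebra A] [DMVAlgebra B] (f : A → B) : Prop :=
  IsMVHom f ∧ ∀ n : ℕ, 1 ≤ n → ∀ x : A, f (DMVAlgebra.delta n x) = DMVAlgebra.delta n (f x)

/-- Ideal of an MV-algebra: contains `0`, downward closed, closed under `⊕`. -/
def IsMVIdeal {A : Type} [MVAlgebra A] (I : Set A) : Prop :=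
  MVAlgebra.zero ∈ I ∧ (∀ x ∈ I, ∀ y : A, MVAlgebra.le y x → y ∈ I) ∧
  ∀ x ∈ I, ∀ y ∈ I, MVAlgebra.oplus x y ∈ I

/-- Maximal ideal: a proper ideal maximal under inclusion. -/
def IsMaximalMVIdeal {A : Type} [MVAlgebra A] (I : Set A) : Prop :=
  IsMVIdeal I ∧ I ≠ Set.univ ∧
  ∀ J : Set A, IsMVIdeal J → J ≠ Set.univ → I ⊆ J → J = I

/-- Semisimplicity: the intersection of all maximal ideals is `{0}`. -/
def IsSemisimple (A : Type) [MVAlgebra A] : Prop :=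
  ∀ x : A, (∀ I : Set A, IsMaximalMVIdeal I → x ∈ I) → x = MVAlgebra.zero

/-- Bimorphism `[0,1]_ℚ × A → C`: preserves `∨`, `∧` and the partial sum `+`
in each argument separately. -/
def IsQBimorphism {A C : Type} [MVAlgebra A] [MVAlgebra C] (β : QI → A → C) : Prop :=
  (∀ (r s : QI) (a : A), β (QI.sup r s) a = MVAlgebra.sup (β r a) (β s a)) ∧
  (∀ (r s : QI) (a : A), β (QI.inf r s) a = MVAlgebra.inf (β r a) (β s a)) ∧
  (∀ (r s : QI) (a : A), QI.odot r s = QI.zero →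
    MVAlgebra.odot (β r a) (β s a) = MVAlgebra.zero ∧
      β (QI.oplus r s) a = MVAlgebra.oplus (β r a) (β s a)) ∧
  (∀ (r : QI) (a b : A), β r (MVAlgebra.sup a b) = MVAlgebra.sup (β r a) (β r b)) ∧
  (∀ (r : QI) (a b : A), β r (MVAlgebra.inf a b) = MVAlgebra.inf (β r a) (β r b)) ∧
  (∀ (r : QI) (a b : A), MVAlgebra.odot a b = MVAlgebra.zero →
    MVAlgebra.odot (β r a) (β r b) = MVAlgebra.zero ∧
      β r (MVAlgebra.oplus a b) = MVAlgebra.oplus (β r a) (β r b))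

/-- `T`, together with the bimorphism `β`, is the semisimple tensor product
`[0,1]_ℚ ⊗ A`: `T` is semisimple and `β` is universal among bimorphisms into
semisimple MV-algebras. -/
def IsQTensor (A T : Type) [MVAlgebra A] [MVAlgebra T] (β : QI → A → T) : Prop :=
  IsSemisimple T ∧ IsQBimorphism β ∧
  ∀ (C : Type) [MVAlgebra C], IsSemisimple C → ∀ γ : QI → A → C, IsQBimorphism γ →
    ∃! h : T → C, IsMVHom h ∧ ∀ (r : QI) (a : A), h (β r a) = γ r a

/-- The DMV-structure of `T` is the canonical one of `[0,1]_ℚ ⊗ A`: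
`δ_n (t ⊗ a) = (t/n) ⊗ a`. -/
def DeltaCompat {A T : Type} [MVAlgebra A] [DMVAlgebra T] (β : QI → A → T) : Prop :=
  ∀ n : ℕ, 1 ≤ n → ∀ (t : QI) (a : A),
    DMVAlgebra.delta n (β t a) = β (QI.div t n) a

namespace MVAux
open MVAlgebra hiding star star_star

local prefix:max "∼" => MVAlgebra.star

variable {A : Type} [MVAlgebra A]

lemma sst (x : A) : ∼(∼x) = x := MVAlgebra.star_star x

lemma one_def : (one : A) = ∼zero := rfl

lemma oneoplus (x : A) : oplus one x = one := oplus_star_zero x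

lemma oplusone (x : A) : oplus x one = one := by rw [oplus_comm]; exact oplus_star_zero x

lemma zerooplus (x : A) : oplus zero x = x := by rw [oplus_comm]; exact oplus_zero x

lemma mvstar_inj {x y : A} (h : ∼x = ∼y) : x = y := by
  rw [← sst x, h, sst]

lemma star_one' : ∼(one : A) = zero := sst zero

lemma star_oplus_self (x : A) : oplus (∼x) x = one := by
  have h := lukasiewicz x (one : A)
  simp only [oplusone, star_one', zerooplus] at h
  exact h.symm

lemma oplus_star_self (x : A) : oplus x (∼x) = one := by
  rw [oplus_comm]; exact star_oplus_self x

lemma odot_def (x y : A) : odot x y = ∼(oplus (∼x) (∼y)) := rfl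

lemma star_odot (x y : A) : ∼(odot x y) = oplus (∼x) (∼y) := sst _

lemma star_oplus (x y : A) : ∼(oplus x y) = odot (∼x) (∼y) := by
  rw [odot_def, sst, sst]

lemma odot_comm (x y : A) : odot x y = odot y x := by rw [odot_def, odot_def, oplus_comm]

lemma odot_assoc (x y z : A) : odot (odot x y) z = odot x (odot y z) := by
  simp only [odot_def, sst, oplus_assoc]

lemma odot_one (x : A) : odot x one = x := by
  rw [odot_def, star_one', oplus_zero, sst]

lemma one_odot (x : A) : odot one x = x := by rw [odot_comm]; exact odot_one x

lemma odot_zero (x : A) : odot x zero = zero := by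
  rw [odot_def, ← one_def, oplusone, star_one']

lemma zero_odot (x : A) : odot zero x = zero := by rw [odot_comm]; exact odot_zero x

lemma odot_star_self (x : A) : odot x (∼x) = zero := by
  rw [odot_def, sst, star_oplus_self, star_one']

lemma star_odot_self (x : A) : odot (∼x) x = zero := by
  rw [odot_comm]; exact odot_star_self x

lemma le_def' (x y : A) : le x y ↔ odot x (∼y) = zero := Iff.rfl

lemma mvle_refl (x : A) : le x x := odot_star_self x

lemma mvzero_le (x : A) : le zero x := zero_odot _

lemma mvle_one (x : A) : le x one := by
  show odot x (∼one) = zero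
  rw [star_one', odot_zero]

lemma mv6 (x y : A) : oplus (odot x (∼y)) y = oplus (odot y (∼x)) x := by
  have h := lukasiewicz x y
  simp only [odot_def, sst]
  exact h

lemma mvle_antisymm {x y : A} (h1 : le x y) (h2 : le y x) : x = y := by
  have h := mv6 x y
  rw [(le_def' x y).1 h1, (le_def' y x).1 h2, zerooplus, zerooplus] at h
  exact h.symm

lemma le_oplus_right (x u : A) : le x (oplus x u) := by
  show odot x (∼(oplus x u)) = zero
  rw [star_oplus, ← odot_assoc, odot_star_self, zero_odot]

lemma le_oplus_left (x u : A) : le x (oplus u x) := by rw [oplus_comm]; exact le_oplus_right x u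

lemma decomp {x y : A} (h : le x y) : oplus x (odot y (∼x)) = y := by
  have h6 := mv6 y x
  rw [(le_def' x y).1 h, zerooplus] at h6
  rw [oplus_comm]
  exact h6

lemma le_iff_exists (x y : A) : le x y ↔ ∃ u, oplus x u = y := by
  constructor
  · intro h; exact ⟨odot y (∼x), decomp h⟩
  · rintro ⟨u, rfl⟩; exact le_oplus_right x u

lemma mvle_trans {x y z : A} (h1 : le x y) (h2 : le y z) : le x z := by
  obtain ⟨u, rfl⟩ := (le_iff_exists x y).1 h1
  obtain ⟨v, rfl⟩ := (le_iff_exists _ z).1 h2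
  rw [oplus_assoc]; exact le_oplus_right _ _

lemma oplus_le_oplus_left {x y : A} (c : A) (h : le x y) : le (oplus x c) (oplus y c) := by
  obtain ⟨u, rfl⟩ := (le_iff_exists x y).1 h
  refine (le_iff_exists _ _).2 ⟨u, ?_⟩
  rw [oplus_assoc, oplus_comm c u, ← oplus_assoc]

lemma oplus_le_oplus_right {x y : A} (c : A) (h : le x y) : le (oplus c x) (oplus c y) := by
  rw [oplus_comm c x, oplus_comm c y]; exact oplus_le_oplus_left c h

lemma oplus_le_oplus {a b c d : A} (h1 : le a b) (h2 : le c d) : le (oplus a c) (oplus b d) :=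
  mvle_trans (oplus_le_oplus_left c h1) (oplus_le_oplus_right b h2)

lemma star_le_star {x y : A} (h : le x y) : le (∼y) (∼x) := by
  show odot (∼y) (∼(∼x)) = zero
  rw [sst, odot_comm]; exact h

lemma star_le_star_iff {x y : A} : le (∼y) (∼x) ↔ le x y := by
  constructor
  · intro h; have := star_le_star h; rwa [sst, sst] at this
  · exact star_le_star

lemma odot_le_odot_left {x y : A} (c : A) (h : le x y) : le (odot x c) (odot y c) := by
  rw [odot_def, odot_def]
  exact star_le_star (oplus_le_oplus_left _ (star_le_star h))

lemma odot_le_odot_right {x y : A} (c : A) (h : le x y) : le (odot c x) (odot c y) := by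
  rw [odot_comm c x, odot_comm c y]; exact odot_le_odot_left c h

lemma odot_le_odot {a b c d : A} (h1 : le a b) (h2 : le c d) : le (odot a c) (odot b d) :=
  mvle_trans (odot_le_odot_left c h1) (odot_le_odot_right b h2)

lemma mvle_bot {x : A} (h : le x zero) : x = zero := mvle_antisymm h (mvzero_le x)

lemma odot_le_left (x y : A) : le (odot x y) x := by
  have := odot_le_odot_right (c := x) (mvle_one y)
  rwa [odot_one] at this

lemma odot_le_right (x y : A) : le (odot x y) y := by rw [odot_comm]; exact odot_le_left y x

end MVAux
namespace MVAux
open MVAlgebra hiding star star_star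
local prefix:max "∼" => MVAlgebra.star

variable {A : Type} [MVAlgebra A]

lemma sup_def (x y : A) : sup x y = oplus (odot x (∼y)) y := rfl

lemma sup_comm' (x y : A) : sup x y = sup y x := mv6 x y

lemma le_sup_right' (x y : A) : le y (sup x y) := le_oplus_left _ _

lemma le_sup_left' (x y : A) : le x (sup x y) := by rw [sup_comm']; exact le_sup_right' y x

lemma sup_eq_right {x y : A} (h : le x y) : sup x y = y := by
  rw [sup_def, (le_def' x y).1 h, zerooplus]

lemma sup_eq_left {x y : A} (h : le y x) : sup x y = x := by
  rw [sup_comm']; exact sup_eq_right h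

lemma sup_le' {x y z : A} (h1 : le x z) (h2 : le y z) : le (sup x y) z := by
  have : le (sup x y) (sup z y) :=
    oplus_le_oplus_left _ (odot_le_odot_left _ h1)
  rw [sup_eq_left h2] at this
  exact this

lemma inf_def (x y : A) : inf x y = odot (oplus x (∼y)) y := rfl

lemma inf_eq_star_sup (x y : A) : inf x y = ∼(sup (∼x) (∼y)) := by
  simp only [inf_def, sup_def, odot_def, sst]

lemma star_inf (x y : A) : ∼(inf x y) = sup (∼x) (∼y) := by rw [inf_eq_star_sup, sst]

lemma star_sup (x y : A) : ∼(sup x y) = inf (∼x) (∼y) := by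
  rw [inf_eq_star_sup, sst, sst]

lemma inf_le_left' (x y : A) : le (inf x y) x := by
  rw [inf_eq_star_sup]
  have := star_le_star (le_sup_left' (∼x) (∼y))
  rwa [sst] at this

lemma inf_le_right' (x y : A) : le (inf x y) y := by
  rw [inf_eq_star_sup]
  have := star_le_star (le_sup_right' (∼x) (∼y))
  rwa [sst] at this

lemma le_inf' {x y z : A} (h1 : le z x) (h2 : le z y) : le z (inf x y) := by
  rw [inf_eq_star_sup]
  rw [← sst z]
  exact star_le_star (sup_le' (star_le_star h1) (star_le_star h2))

lemma inf_comm' (x y : A) : inf x y = inf y x := by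
  rw [inf_eq_star_sup, inf_eq_star_sup, sup_comm']

lemma inf_eq_left {x y : A} (h : le x y) : inf x y = x :=
  mvle_antisymm (inf_le_left' x y) (le_inf' (mvle_refl x) h)

lemma inf_eq_right {x y : A} (h : le y x) : inf x y = y := by
  rw [inf_comm']; exact inf_eq_left h

-- identity B : (a ⊕ c) ⊙ c* = a ∧ c*
lemma idB (a c : A) : odot (oplus a c) (∼c) = inf a (∼c) := by
  rw [inf_def, sst]

lemma sup_mono {a b c d : A} (h1 : le a b) (h2 : le c d) : le (sup a c) (sup b d) :=
  sup_le' (mvle_trans h1 (le_sup_left' _ _)) (mvle_trans h2 (le_sup_right' _ _))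

lemma inf_mono {a b c d : A} (h1 : le a b) (h2 : le c d) : le (inf a c) (inf b d) :=
  le_inf' (mvle_trans (inf_le_left' _ _) h1) (mvle_trans (inf_le_right' _ _) h2)

-- perp
def perp (a b : A) : Prop := odot a b = zero

lemma perp_comm {a b : A} (h : perp a b) : perp b a := by
  unfold perp at *; rwa [odot_comm]

lemma perp_iff_le (a b : A) : perp a b ↔ le a (∼b) := by
  unfold perp; rw [le_def', sst]

lemma perp_mono {a b a' b' : A} (h : perp a b) (ha : le a' a) (hb : le b' b) : perp a' b' := by
  unfold perp at *
  exact mvle_bot (by rw [← h]; exact odot_le_odot ha hb)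

lemma zero_perp (b : A) : perp zero b := zero_odot b

lemma perp_zero (a : A) : perp a zero := odot_zero a

-- cancellation
lemma cancel {a b c : A} (ha : perp a c) (hb : perp b c) (h : oplus a c = oplus b c) : a = b := by
  have ha' : inf a (∼c) = a := inf_eq_left ((perp_iff_le a c).1 ha)
  have hb' : inf b (∼c) = b := inf_eq_left ((perp_iff_le b c).1 hb)
  rw [← ha', ← hb', ← idB, ← idB, h]

-- E' : a ⊥ (b⊕c), b ⊥ c → (a⊕b) ⊥ c
lemma perpE' {a b c : A} (h1 : perp a (oplus b c)) (h2 : perp b c) : perp (oplus a b) c := by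
  rw [perp_iff_le] at *
  have hs : le (oplus a b) (oplus (odot (∼c) (∼b)) b) := by
    apply oplus_le_oplus_left
    rw [star_oplus, odot_comm] at h1
    exact h1
  have : oplus (odot (∼c) (∼b)) b = sup (∼c) b := by rw [sup_def]
  rw [this, sup_eq_left h2] at hs
  exact hs

-- E'' : a ⊥ b, (a⊕b) ⊥ c → a ⊥ (b⊕c)
lemma perpE'' {a b c : A} (h1 : perp a b) (h2 : perp (oplus a b) c) : perp a (oplus b c) := by
  rw [perp_iff_le] at *
  have ha : a = odot (oplus a b) (∼b) := by
    rw [idB, inf_eq_left h1]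
  rw [ha]
  have : le (odot (oplus a b) (∼b)) (odot (∼c) (∼b)) := odot_le_odot_left _ h2
  rw [← star_oplus, oplus_comm c b] at this
  exact this

-- H : a ⊥ (b⊕c), b ⊥ c → b ⊥ (a⊕c)
lemma perpH {a b c : A} (h1 : perp a (oplus b c)) (h2 : perp b c) : perp b (oplus a c) := by
  rw [perp_iff_le] at *
  rw [← star_le_star_iff, sst]
  have hs : le (oplus a c) (oplus (odot (∼b) (∼c)) c) := by
    apply oplus_le_oplus_left
    rw [star_oplus] at h1
    exact h1
  have he : oplus (odot (∼b) (∼c)) c = sup (∼b) c := by rw [sup_def]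
  have h2' : le c (∼b) := by
    have := star_le_star h2; rwa [sst] at this
  rw [he, sup_eq_left h2'] at hs
  exact hs

-- residuation
lemma resid₁ {a b c : A} (h : le a (oplus (∼b) c)) : le (odot a b) c := by
  have : le (odot a b) (odot (oplus (∼b) c) b) := odot_le_odot_left b h
  have h2 : odot (oplus (∼b) c) b = inf c b := by
    rw [inf_def, oplus_comm c (∼b)]
  rw [h2] at this
  exact mvle_trans this (inf_le_left' _ _)

lemma resid₂ {a b c : A} (h : le (odot a b) c) : le a (oplus (∼b) c) := by
  have h1 : le a (sup a (∼b)) := le_sup_left' _ _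
  have h2 : sup a (∼b) = oplus (odot a b) (∼b) := by rw [sup_def, sst]
  rw [h2] at h1
  refine mvle_trans h1 ?_
  rw [oplus_comm (odot a b) (∼b)]
  exact oplus_le_oplus_right _ h

-- distributivity of ⊙ over ∨
lemma odot_sup (x y z : A) : odot x (sup y z) = sup (odot x y) (odot x z) := by
  apply mvle_antisymm
  · rw [odot_comm]
    apply resid₁
    apply sup_le'
    · refine mvle_trans (resid₂ (mvle_refl (odot y x))) ?_
      refine oplus_le_oplus_right _ ?_
      rw [odot_comm y x]
      exact le_sup_left' _ _
    · refine mvle_trans (resid₂ (mvle_refl (odot z x))) ?_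
      refine oplus_le_oplus_right _ ?_
      rw [odot_comm z x]
      exact le_sup_right' _ _
  · exact sup_le' (odot_le_odot_right x (le_sup_left' _ _))
      (odot_le_odot_right x (le_sup_right' _ _))

lemma sup_zero_left (x : A) : sup zero x = x := sup_eq_right (mvzero_le x)

lemma sup_zero_right (x : A) : sup x zero = x := sup_eq_left (mvzero_le x)

-- identity 9 : a = (a ∧ b) ⊕ (a ⊙ b*)
lemma id9 (a b : A) : oplus (inf a b) (odot a (∼b)) = a := by
  have h := decomp (inf_le_left' a b)
  have h2 : odot a (∼(inf a b)) = odot a (∼b) := by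
    rw [star_inf, odot_sup, odot_star_self, sup_zero_left]
  rw [h2] at h
  exact h

-- D : u ∧ (v ⊕ w) ≤ (u∧v) ⊕ (u∧w)
lemma lemD (u v w : A) : le (inf u (oplus v w)) (oplus (inf u v) (inf u w)) := by
  set p := inf u (oplus v w) with hp
  have hpu : odot p (∼u) = zero := inf_le_left' u (oplus v w)
  have hpvw : odot p (∼(oplus v w)) = zero := inf_le_right' u (oplus v w)
  show odot p (∼(oplus (inf u v) (inf u w))) = zero
  rw [star_oplus, star_inf, star_inf, ← odot_assoc]
  have h1 : odot p (sup (∼u) (∼v)) = odot p (∼v) := by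
    rw [odot_sup, hpu, sup_zero_left]
  rw [h1]
  have t1 : odot (odot p (∼v)) (∼u) = zero := by
    rw [odot_assoc, odot_comm (∼v) (∼u), ← odot_assoc, hpu, zero_odot]
  have t2 : odot (odot p (∼v)) (∼w) = zero := by
    rw [odot_assoc, ← star_oplus, hpvw]
  rw [odot_sup, t1, t2, sup_zero_left]

end MVAux
namespace MVAux
open MVAlgebra hiding star star_star
local prefix:max "∼" => MVAlgebra.star

variable {A : Type} [MVAlgebra A]

-- N : (c⊕a) ∧ (c⊕b) = c ⊕ (a∧b)
lemma lemN (c a b : A) : inf (oplus c a) (oplus c b) = oplus c (inf a b) := by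
  apply mvle_antisymm
  · set m := inf (oplus c a) (oplus c b) with hm
    have hcm : le c m := le_inf' (le_oplus_right c a) (le_oplus_right c b)
    have hdec : oplus c (odot m (∼c)) = m := decomp hcm
    have h1 : le (odot m (∼c)) (inf a b) := by
      apply le_inf'
      · have h : le (odot m (∼c)) (odot (oplus c a) (∼c)) :=
          odot_le_odot_left _ (inf_le_left' _ _)
        rw [oplus_comm c a, idB] at h
        exact mvle_trans h (inf_le_left' _ _)
      · have h : le (odot m (∼c)) (odot (oplus c b) (∼c)) :=
          odot_le_odot_left _ (inf_le_right' _ _)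
        rw [oplus_comm c b, idB] at h
        exact mvle_trans h (inf_le_left' _ _)
    have h2 : le (oplus c (odot m (∼c))) (oplus c (inf a b)) := oplus_le_oplus_right c h1
    rw [hdec] at h2
    exact h2
  · exact le_inf' (oplus_le_oplus_right c (inf_le_left' a b))
      (oplus_le_oplus_right c (inf_le_right' a b))

-- nmul lemmas
lemma nmul_zero_n (x : A) : nmul 0 x = zero := rfl

lemma nmul_succ (n : ℕ) (x : A) : nmul (n+1) x = oplus (nmul n x) x := rfl

lemma nmul_one' (x : A) : nmul 1 x = x := by
  rw [nmul_succ, nmul_zero_n, zerooplus]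

lemma nmul_zero' (n : ℕ) : nmul n (zero : A) = zero := by
  induction n with
  | zero => rfl
  | succ k ih => rw [nmul_succ, ih, oplus_zero]

lemma nmul_add (m n : ℕ) (x : A) : nmul (m + n) x = oplus (nmul m x) (nmul n x) := by
  induction n with
  | zero => rw [Nat.add_zero, nmul_zero_n, oplus_zero]
  | succ k ih =>
    rw [← Nat.add_assoc, nmul_succ, nmul_succ, ih, oplus_assoc]

lemma nmul_mul (m n : ℕ) (x : A) : nmul (m * n) x = nmul m (nmul n x) := by
  induction m with
  | zero => rw [Nat.zero_mul]; rfl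
  | succ k ih =>
    rw [Nat.succ_mul, nmul_add, ih, nmul_succ]

lemma nmul_oplus (n : ℕ) (x y : A) : nmul n (oplus x y) = oplus (nmul n x) (nmul n y) := by
  induction n with
  | zero => rw [nmul_zero_n, nmul_zero_n, nmul_zero_n, oplus_zero]
  | succ k ih =>
    rw [nmul_succ, nmul_succ, nmul_succ, ih]
    rw [oplus_assoc, oplus_assoc]
    congr 1
    rw [← oplus_assoc, ← oplus_assoc, oplus_comm (nmul k y) x]

lemma nmul_le_nmul_left {m n : ℕ} (h : m ≤ n) (x : A) : le (nmul m x) (nmul n x) := by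
  obtain ⟨k, rfl⟩ := Nat.exists_eq_add_of_le h
  rw [nmul_add]
  exact le_oplus_right _ _

lemma nmul_le_nmul {x y : A} (n : ℕ) (h : le x y) : le (nmul n x) (nmul n y) := by
  induction n with
  | zero => exact mvle_refl _
  | succ k ih => exact oplus_le_oplus ih h

lemma le_nmul {n : ℕ} (hn : 1 ≤ n) (x : A) : le x (nmul n x) := by
  have := nmul_le_nmul_left hn x
  rwa [nmul_one'] at this

-- orthogonality of multiples
lemma orth_nmul {n : ℕ} {x : A} (hg : odot x (nmul (n-1) x) = zero)
    {k m : ℕ} (hkm : k + m ≤ n) : odot (nmul k x) (nmul m x) = zero := by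
  have hx : ∀ j, j + 1 ≤ n → odot x (nmul j x) = zero := by
    intro j hj
    exact perp_mono hg (mvle_refl x) (nmul_le_nmul_left (by omega) x)
  have main : ∀ k, k ≤ n → odot (nmul k x) (nmul (n-k) x) = zero := by
    intro k
    induction k with
    | zero => intro _; exact zero_odot _
    | succ j ih =>
      intro hj
      have h1 : odot (nmul j x) (nmul (n-j) x) = zero := ih (by omega)
      have h2 : nmul (n-j) x = oplus x (nmul (n-j-1) x) := by
        conv_lhs => rw [show n - j = (n-j-1)+1 from by omega]
        rw [nmul_succ, oplus_comm]
      rw [h2] at h1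
      have h3 : odot x (nmul (n-j-1) x) = zero := hx _ (by omega)
      have := perpE' (a := nmul j x) (b := x) (c := nmul (n-j-1) x) h1 h3
      rw [← nmul_succ] at this
      have heq : n - j - 1 = n - (j+1) := by omega
      rwa [heq] at this
  refine perp_mono (main k (by omega)) (mvle_refl _) (nmul_le_nmul_left (by omega) x)

-- Mix : a ⊥ b, n(a⊕b) good → (na) ⊥ (nb)
lemma mix {n : ℕ} {a b : A} (hab : odot a b = zero)
    (hg : odot (oplus a b) (nmul (n-1) (oplus a b)) = zero) :
    odot (nmul n a) (nmul n b) = zero := by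
  set x := oplus a b with hx
  have hax : le a x := le_oplus_right a b
  have hbx : le b x := le_oplus_left b a
  have hxk : ∀ k, k + 1 ≤ n → odot x (nmul k x) = zero := by
    intro k hk
    exact perp_mono hg (mvle_refl x) (nmul_le_nmul_left (by omega) x)
  suffices h : ∀ k, k ≤ n → odot (nmul k a) (nmul k b) = zero by
    exact h n (le_refl n)
  intro k
  induction k with
  | zero => intro _; exact zero_odot _
  | succ j ih =>
    intro hj
    have IH : odot (nmul j a) (nmul j b) = zero := ih (by omega)
    have kx_eq : nmul j x = oplus (nmul j a) (nmul j b) := nmul_oplus j a b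
    have h1 : odot a (nmul j x) = zero := by
      have := hxk j (by omega)
      exact perp_mono this hax (mvle_refl _)
    have h2 : odot b (nmul j x) = zero := by
      have := hxk j (by omega)
      exact perp_mono this hbx (mvle_refl _)
    have step1 : odot (nmul j a) (oplus a (nmul j b)) = zero := by
      refine perpH ?_ IH
      rw [← kx_eq]; exact h1
    have step2 : odot (nmul (j+1) a) (nmul j b) = zero := by
      rw [nmul_succ]
      refine perpE' step1 ?_
      exact perp_mono h1 (mvle_refl a) (nmul_le_nmul j hbx)
    have step3 : odot a (oplus b (nmul j x)) = zero := by
      refine perpE'' hab ?_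
      rw [← hx]
      exact hxk j (by omega)
    have step4 : odot b (oplus a (nmul j x)) = zero := perpH step3 h2
    have step5 : odot (oplus (nmul (j+1) a) (nmul j b)) b = zero := by
      have harr : oplus (nmul (j+1) a) (nmul j b) = oplus a (nmul j x) := by
        rw [kx_eq, nmul_succ, oplus_comm (nmul j a) a, oplus_assoc]
      rw [harr]
      exact perp_comm step4
    have := perpE'' step2 step5
    rwa [← nmul_succ] at this

-- good_oplus core
lemma good_oplus {m : ℕ} {a b : A} (hab : odot a b = zero)
    (hga : odot a (nmul m a) = zero) (hgb : odot b (nmul m b) = zero)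
    (hO : odot (nmul (m+1) a) (nmul (m+1) b) = zero) :
    odot (oplus a b) (nmul m (oplus a b)) = zero := by
  rw [nmul_oplus]
  -- b ⊥ (ma ⊕ mb)
  have hbY : odot b (oplus (nmul m a) (nmul m b)) = zero := by
    rw [oplus_comm (nmul m a) (nmul m b)]
    refine perpE'' hgb ?_
    rw [oplus_comm b (nmul m b), ← nmul_succ]
    refine perp_mono (perp_comm hO) (mvle_refl _) (nmul_le_nmul_left (by omega) a)
  -- a ⊥ (b ⊕ ma ⊕ mb)
  have haY : odot a (oplus b (oplus (nmul m a) (nmul m b))) = zero := by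
    have harr : oplus b (oplus (nmul m a) (nmul m b)) = oplus (nmul m a) (nmul (m+1) b) := by
      rw [nmul_succ, oplus_comm (nmul m b) b, ← oplus_assoc, oplus_comm b (nmul m a), oplus_assoc]
    rw [harr]
    refine perpE'' hga ?_
    rw [oplus_comm a (nmul m a), ← nmul_succ]
    exact hO
  exact perpE' haY hbY

-- disjointness propagation
lemma disj_nmul {a b : A} (h : inf a b = zero) (k m : ℕ) :
    inf (nmul k a) (nmul m b) = zero := by
  have perp_of_inf : ∀ {u v w : A}, inf u v = zero → inf u w = zero →
      inf u (oplus v w) = zero := by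
    intro u v w h1 h2
    apply mvle_bot
    have := lemD u v w
    rw [h1, h2, oplus_zero] at this
    exact this
  have step1 : ∀ j, inf a (nmul j b) = zero := by
    intro j
    induction j with
    | zero => rw [nmul_zero_n, inf_comm']; exact inf_eq_left (mvzero_le a)
    | succ i ih => rw [nmul_succ]; exact perp_of_inf ih h
  have step2 : ∀ i j, inf (nmul i a) (nmul j b) = zero := by
    intro i j
    induction i with
    | zero => rw [nmul_zero_n]; exact inf_eq_left (mvzero_le _)
    | succ i' ih =>
      rw [nmul_succ, inf_comm']
      apply perp_of_inf
      · rw [inf_comm']; exact ih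
      · rw [inf_comm']; exact step1 j
  exact step2 k m

end MVAux
namespace MVAux
open MVAlgebra hiding star star_star
local prefix:max "∼" => MVAlgebra.star

variable {A : Type} [MVAlgebra A]

lemma div_unique {n : ℕ} (hn : 1 ≤ n) {y z : A}
    (hy : odot y (nmul (n-1) y) = zero) (hz : odot z (nmul (n-1) z) = zero)
    (h : nmul n y = nmul n z) : y = z := by
  set w := inf y z with hw
  set y' := odot y (∼w) with hy'
  set z' := odot z (∼w) with hz'
  have hwy : le w y := inf_le_left' y z
  have hwz : le w z := inf_le_right' y z
  have hyd : oplus w y' = y := decomp hwy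
  have hzd : oplus w z' = z := decomp hwz
  have hy'w : odot y' w = zero := by
    rw [hy', odot_assoc, star_odot_self, odot_zero]
  have hz'w : odot z' w = zero := by
    rw [hz', odot_assoc, star_odot_self, odot_zero]
  have hd : inf y' z' = zero := by
    have l1 : le (oplus w (inf y' z')) y := by
      rw [← hyd]; exact oplus_le_oplus_right w (inf_le_left' _ _)
    have l2 : le (oplus w (inf y' z')) z := by
      rw [← hzd]; exact oplus_le_oplus_right w (inf_le_right' _ _)
    have hle : le (oplus w (inf y' z')) w := le_inf' l1 l2
    have hdw : odot (inf y' z') w = zero :=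
      perp_mono hy'w (inf_le_left' _ _) (mvle_refl w)
    have heq : oplus (inf y' z') w = oplus zero w := by
      rw [zerooplus]
      apply mvle_antisymm
      · rw [oplus_comm]; exact hle
      · exact le_oplus_left w _
    exact cancel hdw (zero_odot w) heq
  have hwy' : odot w y' = zero := perp_comm hy'w
  have hwz' : odot w z' = zero := perp_comm hz'w
  have hny : nmul n y = oplus (nmul n w) (nmul n y') := by
    rw [← hyd, nmul_oplus]
  have hnz : nmul n z = oplus (nmul n w) (nmul n z') := by
    rw [← hzd, nmul_oplus]
  have hOy : odot (nmul n w) (nmul n y') = zero := by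
    apply mix hwy'
    rw [hyd]; exact hy
  have hOz : odot (nmul n w) (nmul n z') = zero := by
    apply mix hwz'
    rw [hzd]; exact hz
  have hs : nmul n y' = nmul n z' := by
    apply cancel (c := nmul n w) (perp_comm hOy) (perp_comm hOz)
    rw [oplus_comm, ← hny, oplus_comm (nmul n z') _, ← hnz, h]
  have hy0 : y' = zero := by
    have h1 : le y' (nmul n z') := by rw [← hs]; exact le_nmul hn y'
    have h3 : inf y' (nmul n z') = zero := by
      have := disj_nmul hd 1 n
      rwa [nmul_one'] at this
    rw [← inf_eq_left h1, h3]
  have hz0 : z' = zero := by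
    have h1 : le z' (nmul n y') := by rw [hs]; exact le_nmul hn z'
    have h3 : inf z' (nmul n y') = zero := by
      have hd' : inf z' y' = zero := by rw [inf_comm']; exact hd
      have := disj_nmul hd' 1 n
      rwa [nmul_one'] at this
    rw [← inf_eq_left h1, h3]
  rw [← hyd, ← hzd, hy0, hz0]

end MVAux
namespace MVAux
open MVAlgebra hiding star star_star
local prefix:max "∼" => MVAlgebra.star

variable {A : Type} [MVAlgebra A]

lemma odot_left_comm (a b c : A) : odot a (odot b c) = odot b (odot a c) := by
  rw [← odot_assoc, odot_comm a b, odot_assoc]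

lemma odot_sub_self (x y : A) : odot (odot x (∼y)) y = zero := by
  rw [odot_assoc, star_odot_self, odot_zero]

lemma good_mono {q : ℕ} {x y : A} (h : le y x) (hg : odot x (nmul (q-1) x) = zero) :
    odot y (nmul (q-1) y) = zero :=
  perp_mono hg h (nmul_le_nmul _ h)

lemma disj_parts (s t : A) :
    inf (odot s (∼(inf s t))) (odot t (∼(inf s t))) = zero := by
  set w := inf s t with hw
  set s' := odot s (∼w) with hs'
  set t' := odot t (∼w) with ht'
  have hws : oplus w s' = s := decomp (inf_le_left' s t)
  have hwt : oplus w t' = t := decomp (inf_le_right' s t)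
  have hs'w : odot s' w = zero := by
    rw [hs', odot_assoc, star_odot_self, odot_zero]
  have l1 : le (oplus w (inf s' t')) s := by
    rw [← hws]; exact oplus_le_oplus_right w (inf_le_left' _ _)
  have l2 : le (oplus w (inf s' t')) t := by
    rw [← hwt]; exact oplus_le_oplus_right w (inf_le_right' _ _)
  have hle : le (oplus w (inf s' t')) w := le_inf' l1 l2
  have hdw : odot (inf s' t') w = zero :=
    perp_mono hs'w (inf_le_left' _ _) (mvle_refl w)
  have heq : oplus (inf s' t') w = oplus zero w := by
    rw [zerooplus]
    apply mvle_antisymm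
    · rw [oplus_comm]; exact hle
    · exact le_oplus_left w _
  exact cancel hdw (zero_odot w) heq

lemma nmul_sub {p q : ℕ} (hp : p ≤ q) (s t : A)
    (hgt : odot t (nmul (q-1) t) = zero) :
    nmul p (odot t (∼s)) = odot (nmul p t) (∼(nmul p s)) := by
  set w := inf s t with hw
  set s' := odot s (∼w) with hs'
  set t' := odot t (∼w) with ht'
  have hws : oplus w s' = s := decomp (inf_le_left' s t)
  have hwt : oplus w t' = t := decomp (inf_le_right' s t)
  have hdisj : inf s' t' = zero := disj_parts s t
  have ht'w : le t' (∼w) := odot_le_right t (∼w)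
  have hid : odot t' (∼s') = t' := by
    have h9 := id9 t' s'
    rw [inf_comm' t' s', hdisj, zerooplus] at h9
    exact h9
  have hsub : odot t (∼s) = t' := by
    conv_lhs => rw [← hws, ← hwt]
    rw [star_oplus, ← odot_assoc, oplus_comm w t', idB, inf_eq_left ht'w, hid]
  have hwt' : odot w t' = zero := by
    rw [ht', odot_left_comm, odot_star_self, odot_zero]
  have hqwt' : odot (nmul q w) (nmul q t') = zero := by
    apply mix hwt'
    rw [hwt]; exact hgt
  have hpt'w : le (nmul p t') (∼(nmul p w)) := by
    rw [← perp_iff_le]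
    exact perp_comm (perp_mono hqwt' (nmul_le_nmul_left hp w) (nmul_le_nmul_left hp t'))
  have hdp : inf (nmul p t') (nmul p s') = zero := by
    have h := disj_nmul (by rw [inf_comm']; exact hdisj : inf t' s' = zero) p p
    exact h
  have hidp : odot (nmul p t') (∼(nmul p s')) = nmul p t' := by
    have h9 := id9 (nmul p t') (nmul p s')
    rw [hdp, zerooplus] at h9
    exact h9
  rw [hsub]
  conv_rhs => rw [← hws, ← hwt]
  rw [nmul_oplus, nmul_oplus, star_oplus, ← odot_assoc, oplus_comm (nmul p w) (nmul p t'),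
    idB, inf_eq_left hpt'w, hidp]

lemma nmul_sup {p q : ℕ} (hp : p ≤ q) (s t : A)
    (hgt : odot t (nmul (q-1) t) = zero) :
    nmul p (sup s t) = sup (nmul p s) (nmul p t) := by
  rw [sup_comm' s t, sup_def, nmul_oplus, nmul_sub hp s t hgt, ← sup_def, sup_comm']

lemma nmul_inf (p : ℕ) (s t : A) : nmul p (inf s t) = inf (nmul p s) (nmul p t) := by
  set w := inf s t with hw
  set s' := odot s (∼w) with hs'
  set t' := odot t (∼w) with ht'
  have hws : oplus w s' = s := decomp (inf_le_left' s t)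
  have hwt : oplus w t' = t := decomp (inf_le_right' s t)
  have hdisj : inf s' t' = zero := disj_parts s t
  have hdp : inf (nmul p s') (nmul p t') = zero := disj_nmul hdisj p p
  conv_rhs => rw [← hws, ← hwt]
  rw [nmul_oplus, nmul_oplus, lemN, hdp, oplus_zero]

lemma good_sup {q : ℕ} {s t : A}
    (hgs : odot s (nmul (q-1) s) = zero) (hgt : odot t (nmul (q-1) t) = zero) :
    odot (sup s t) (nmul (q-1) (sup s t)) = zero := by
  rcases Nat.eq_zero_or_pos q with hq | hq
  · subst hq
    simp only [Nat.zero_sub, nmul_zero_n, odot_zero]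
  obtain ⟨m, rfl⟩ : ∃ m, q = m + 1 := ⟨q - 1, by omega⟩
  rw [sup_comm', sup_def]
  have hm : (m + 1) - 1 = m := by omega
  rw [hm] at hgs hgt ⊢
  apply good_oplus
  · rw [odot_assoc, star_odot_self, odot_zero]
  · exact perp_mono hgt (odot_le_left t (∼s)) (nmul_le_nmul m (odot_le_left t (∼s)))
  · exact hgs
  · have hsb : nmul (m+1) (odot t (∼s)) = odot (nmul (m+1) t) (∼(nmul (m+1) s)) := by
      apply nmul_sub (le_refl (m+1))
      rw [hm]; exact hgt
    rw [hsb, odot_assoc, star_odot_self, odot_zero]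

lemma good_inf_left {q : ℕ} {s t : A}
    (hgs : odot s (nmul (q-1) s) = zero) :
    odot (inf s t) (nmul (q-1) (inf s t)) = zero :=
  good_mono (inf_le_left' s t) hgs

end MVAux
namespace MVAux
open MVAlgebra hiding star star_star
open DMVAlgebra (delta delta_nmul delta_odot)
local prefix:max "∼" => MVAlgebra.star

section DMV
variable {V : Type} [DMVAlgebra V]

lemma delta_unique {n : ℕ} (hn : 1 ≤ n) {x y : V} (h1 : nmul n y = x)
    (h2 : odot y (nmul (n-1) y) = zero) : y = delta n x := by
  apply div_unique hn h2 (delta_odot n hn x)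
  rw [delta_nmul n hn x]; exact h1

lemma delta_one' (x : V) : delta 1 x = x := by
  have h := delta_unique (le_refl 1) (nmul_one' x)
    (by rw [show (1:ℕ)-1 = 0 from rfl, nmul_zero_n, odot_zero])
  exact h.symm

lemma delta_mul {q k : ℕ} (hq : 1 ≤ q) (hk : 1 ≤ k) (x : V) :
    nmul k (delta (q*k) x) = delta q x := by
  have hqk : 1 ≤ q * k := Nat.mul_pos hq hk
  apply delta_unique hq
  · rw [← nmul_mul, delta_nmul _ hqk]
  · rw [← nmul_mul]
    apply orth_nmul (delta_odot (q*k) hqk x)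
    obtain ⟨m, rfl⟩ : ∃ m, q = m+1 := ⟨q-1, by omega⟩
    have h1 : (m+1-1) = m := by omega
    rw [h1, Nat.succ_mul]
    omega

lemma act_eq {p q p' q' : ℕ} (hq : 1 ≤ q) (hq' : 1 ≤ q')
    (h : p * q' = p' * q) (x : V) :
    nmul p (delta q x) = nmul p' (delta q' x) := by
  rw [← delta_mul hq hq' x, ← delta_mul hq' hq x, ← nmul_mul, ← nmul_mul, h,
    Nat.mul_comm q' q]

lemma delta_le_self {q : ℕ} (hq : 1 ≤ q) (u : V) : le (delta q u) u := by
  have := le_nmul hq (delta q u)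
  rwa [delta_nmul q hq u] at this

lemma delta_perp {q : ℕ} (hq : 1 ≤ q) {u e : V} (h : odot u e = zero) :
    odot (delta q u) (delta q e) = zero :=
  perp_mono h (delta_le_self hq u) (delta_le_self hq e)

lemma delta_oplus_perp {q : ℕ} (hq : 1 ≤ q) {u e : V} (h : odot u e = zero) :
    delta q (oplus u e) = oplus (delta q u) (delta q e) := by
  symm
  apply delta_unique hq
  · rw [nmul_oplus, delta_nmul _ hq, delta_nmul _ hq]
  · obtain ⟨m, rfl⟩ : ∃ m, q = m+1 := ⟨q-1, by omega⟩
    have h1 : (m+1-1) = m := by omega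
    rw [h1]
    apply good_oplus (delta_perp (by omega) h)
    · have := delta_odot (m+1) (by omega) u
      rwa [h1] at this
    · have := delta_odot (m+1) (by omega) e
      rwa [h1] at this
    · rw [delta_nmul _ (by omega : 1 ≤ m+1), delta_nmul _ (by omega : 1 ≤ m+1)]
      exact h

lemma delta_sup {q : ℕ} (hq : 1 ≤ q) (u v : V) :
    delta q (sup u v) = sup (delta q u) (delta q v) := by
  symm
  apply delta_unique hq
  · rw [nmul_sup (le_refl q) _ _ (delta_odot q hq v), delta_nmul _ hq, delta_nmul _ hq]
  · exact good_sup (delta_odot q hq u) (delta_odot q hq v)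

lemma delta_inf {q : ℕ} (hq : 1 ≤ q) (u v : V) :
    delta q (inf u v) = inf (delta q u) (delta q v) := by
  symm
  apply delta_unique hq
  · rw [nmul_inf, delta_nmul _ hq, delta_nmul _ hq]
  · exact good_inf_left (delta_odot q hq u)

end DMV

section Hom
variable {A B : Type} [MVAlgebra A] [MVAlgebra B] {f : A → B}

lemma hom_odot (hf : IsMVHom f) (x y : A) : f (odot x y) = odot (f x) (f y) := by
  rw [odot_def, hf.2.1, hf.1, hf.2.1, hf.2.1, odot_def]

lemma hom_one (hf : IsMVHom f) : f one = one := by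
  rw [one_def, hf.2.1, hf.2.2, one_def]

lemma hom_nmul (hf : IsMVHom f) (n : ℕ) (x : A) : f (nmul n x) = nmul n (f x) := by
  induction n with
  | zero => exact hf.2.2
  | succ k ih => rw [nmul_succ, hf.1, ih, nmul_succ]

lemma hom_sup (hf : IsMVHom f) (x y : A) : f (sup x y) = sup (f x) (f y) := by
  rw [sup_def, hf.1, hom_odot hf, hf.2.1, sup_def]

lemma hom_inf (hf : IsMVHom f) (x y : A) : f (inf x y) = inf (f x) (f y) := by
  rw [inf_def, hom_odot hf, hf.1, hf.2.1, inf_def]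

end Hom

end MVAux
namespace MVAux
open MVAlgebra hiding star star_star
open DMVAlgebra (delta delta_nmul delta_odot)

lemma QI_den_pos (r : QI) : 1 ≤ r.1.den := r.1.pos

lemma QI_num_cast (r : QI) : ((r.1.num.toNat : ℚ)) = (r.1.num : ℚ) := by
  have h : (r.1.num.toNat : ℤ) = r.1.num := Int.toNat_of_nonneg (Rat.num_nonneg.2 r.2.1)
  exact_mod_cast congrArg (fun z : ℤ => (z : ℚ)) h

lemma QI_val_eq (r : QI) : ((r.1.num.toNat : ℚ)) / ((r.1.den : ℚ)) = r.1 := by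
  rw [QI_num_cast]
  exact Rat.num_div_den r.1

lemma QI_num_le_den (r : QI) : r.1.num.toNat ≤ r.1.den := by
  have hq : (0:ℚ) < (r.1.den : ℚ) := by exact_mod_cast QI_den_pos r
  have h1 : ((r.1.num.toNat : ℚ)) / ((r.1.den : ℚ)) ≤ 1 := by
    rw [QI_val_eq]; exact r.2.2
  have := (div_le_one hq).1 h1
  exact_mod_cast this

lemma rep_eq {V : Type} [DMVAlgebra V] (v : V) {p q P Q : ℕ} (hq : 1 ≤ q) (hQ : 1 ≤ Q)
    (h : (p:ℚ)/(q:ℚ) = (P:ℚ)/(Q:ℚ)) : nmul p (delta q v) = nmul P (delta Q v) := by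
  apply act_eq hq hQ
  have hq0 : ((q:ℚ)) ≠ 0 := by positivity
  have hQ0 : ((Q:ℚ)) ≠ 0 := by positivity
  rw [div_eq_div_iff hq0 hQ0] at h
  exact_mod_cast h

lemma QI_odot_zero_iff (r s : QI) : QI.odot r s = QI.zero ↔ r.1 + s.1 ≤ 1 := by
  refine Subtype.ext_iff.trans ?_
  show (1 : ℚ) - min ((1 - r.1) + (1 - s.1)) 1 = 0 ↔ _
  rcases le_total ((1 - r.1) + (1 - s.1)) 1 with h | h
  · rw [min_eq_left h]
    constructor
    · intro he; linarith
    · intro he; linarith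
  · rw [min_eq_right h]
    constructor
    · intro _; linarith
    · intro _; ring

end MVAux
namespace MVAux
open MVAlgebra hiding star star_star
open DMVAlgebra (delta delta_nmul delta_odot)

def gammaF {B V : Type} [MVAlgebra B] [DMVAlgebra V] (f : B → V) : QI → B → V :=
  fun r b => nmul r.1.num.toNat (delta r.1.den (f b))

variable {B V : Type} [MVAlgebra B] [DMVAlgebra V] {f : B → V}

lemma gamma_rep (f : B → V) (r : QI) (b : B) {P Q : ℕ} (hQ : 1 ≤ Q)
    (h : (P:ℚ)/(Q:ℚ) = r.1) : gammaF f r b = nmul P (delta Q (f b)) := by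
  apply rep_eq (f b) (QI_den_pos r) hQ
  rw [QI_val_eq r, h]

lemma common_left (r s : QI) :
    ((r.1.num.toNat * s.1.den : ℕ):ℚ)/((r.1.den * s.1.den : ℕ):ℚ) = r.1 := by
  have hqs : ((s.1.den:ℚ)) ≠ 0 := by
    have := QI_den_pos s; positivity
  push_cast
  rw [mul_div_mul_comm, div_self hqs, mul_one, QI_val_eq]

lemma common_right (r s : QI) :
    ((s.1.num.toNat * r.1.den : ℕ):ℚ)/((r.1.den * s.1.den : ℕ):ℚ) = s.1 := by
  have hqr : ((r.1.den:ℚ)) ≠ 0 := by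
    have := QI_den_pos r; positivity
  push_cast
  rw [mul_comm ((r.1.den:ℚ)) ((s.1.den:ℚ)), mul_div_mul_comm, div_self hqr, mul_one,
    QI_val_eq]

lemma den_mul_pos (r s : QI) : 1 ≤ r.1.den * s.1.den :=
  Nat.mul_pos (QI_den_pos r) (QI_den_pos s)

lemma cross_le {r s : QI} (h : r.1 ≤ s.1) :
    r.1.num.toNat * s.1.den ≤ s.1.num.toNat * r.1.den := by
  have hqr : (0:ℚ) < (r.1.den:ℚ) := by exact_mod_cast QI_den_pos r
  have hqs : (0:ℚ) < (s.1.den:ℚ) := by exact_mod_cast QI_den_pos s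
  have h1 : ((r.1.num.toNat:ℚ))/(r.1.den:ℚ) ≤ ((s.1.num.toNat:ℚ))/(s.1.den:ℚ) := by
    rw [QI_val_eq, QI_val_eq]; exact h
  have h2 := (div_le_div_iff₀ hqr hqs).1 h1
  exact_mod_cast h2

lemma gamma_mono (hf : IsMVHom f) (r s : QI) (a : B) (h : r.1 ≤ s.1) :
    le (gammaF f r a) (gammaF f s a) := by
  rw [gamma_rep f r a (den_mul_pos r s) (common_left r s),
    gamma_rep f s a (den_mul_pos r s) (common_right r s)]
  exact nmul_le_nmul_left (cross_le h) _

lemma gamma_le_f (hf : IsMVHom f) (r : QI) (a : B) : le (gammaF f r a) (f a) := by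
  have h1 : le (gammaF f r a) (nmul r.1.den (delta r.1.den (f a))) :=
    nmul_le_nmul_left (QI_num_le_den r) _
  rwa [delta_nmul _ (QI_den_pos r)] at h1

lemma gamma_bim (hf : IsMVHom f) : IsQBimorphism (gammaF f) := by
  refine ⟨?_, ?_, ?_, ?_, ?_, ?_⟩
  · -- sup first arg
    intro r s a
    rcases le_total r.1 s.1 with h | h
    · have e : QI.sup r s = s := Subtype.ext (max_eq_right h)
      rw [e]
      exact (sup_eq_right (gamma_mono hf r s a h)).symm
    · have e : QI.sup r s = r := Subtype.ext (max_eq_left h)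
      rw [e]
      exact (sup_eq_left (gamma_mono hf s r a h)).symm
  · -- inf first arg
    intro r s a
    rcases le_total r.1 s.1 with h | h
    · have e : QI.inf r s = r := Subtype.ext (min_eq_left h)
      rw [e]
      exact (inf_eq_left (gamma_mono hf r s a h)).symm
    · have e : QI.inf r s = s := Subtype.ext (min_eq_right h)
      rw [e]
      exact (inf_eq_right (gamma_mono hf s r a h)).symm
  · -- oplus first arg
    intro r s a h
    have hval : r.1 + s.1 ≤ 1 := (QI_odot_zero_iff r s).1 h
    have hQ : 1 ≤ r.1.den * s.1.den := den_mul_pos r s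
    have hQQ : (0:ℚ) < ((r.1.den * s.1.den : ℕ):ℚ) := by exact_mod_cast hQ
    have e1 : gammaF f r a = nmul (r.1.num.toNat * s.1.den) (delta (r.1.den * s.1.den) (f a)) :=
      gamma_rep f r a hQ (common_left r s)
    have e2 : gammaF f s a = nmul (s.1.num.toNat * r.1.den) (delta (r.1.den * s.1.den) (f a)) :=
      gamma_rep f s a hQ (common_right r s)
    have hsum : (((r.1.num.toNat * s.1.den + s.1.num.toNat * r.1.den : ℕ)):ℚ) /
        ((r.1.den * s.1.den : ℕ):ℚ) = r.1 + s.1 := by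
      have c1 := common_left r s
      have c2 := common_right r s
      push_cast at c1 c2 ⊢
      rw [add_div, c1, c2]
    have hle : r.1.num.toNat * s.1.den + s.1.num.toNat * r.1.den ≤ r.1.den * s.1.den := by
      have hc : (((r.1.num.toNat * s.1.den + s.1.num.toNat * r.1.den : ℕ)):ℚ) ≤
          ((r.1.den * s.1.den : ℕ):ℚ) := by
        have h1 : (((r.1.num.toNat * s.1.den + s.1.num.toNat * r.1.den : ℕ)):ℚ) /
            ((r.1.den * s.1.den : ℕ):ℚ) ≤ 1 := by rw [hsum]; exact hval
        rw [div_le_one hQQ] at h1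
        exact h1
      exact_mod_cast hc
    constructor
    · rw [e1, e2]
      exact orth_nmul (delta_odot _ hQ (f a)) hle
    · have e3 : gammaF f (QI.oplus r s) a =
          nmul (r.1.num.toNat * s.1.den + s.1.num.toNat * r.1.den)
            (delta (r.1.den * s.1.den) (f a)) := by
        apply gamma_rep f _ a hQ
        rw [hsum]
        show _ = min (r.1 + s.1) 1
        rw [min_eq_left hval]
      rw [e1, e2, e3, nmul_add]
  · -- sup second arg
    intro r a b
    show nmul _ (delta _ (f (MVAlgebra.sup a b))) = _
    rw [hom_sup hf, delta_sup (QI_den_pos r), nmul_sup (QI_num_le_den r) _ _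
      (delta_odot _ (QI_den_pos r) (f b))]
    rfl
  · -- inf second arg
    intro r a b
    show nmul _ (delta _ (f (MVAlgebra.inf a b))) = _
    rw [hom_inf hf, delta_inf (QI_den_pos r), nmul_inf]
    rfl
  · -- oplus second arg
    intro r a b h
    have hfab : odot (f a) (f b) = zero := by
      rw [← hom_odot hf, h, hf.2.2]
    constructor
    · exact perp_mono hfab (gamma_le_f hf r a) (gamma_le_f hf r b)
    · show nmul _ (delta _ (f (oplus a b))) = _
      rw [hf.1, delta_oplus_perp (QI_den_pos r) hfab, nmul_oplus]
      rfl

end MVAux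
namespace MVAux
open MVAlgebra hiding star star_star
open DMVAlgebra (delta delta_nmul delta_odot)

variable {B T : Type} [MVAlgebra B] [MVAlgebra T] {β : QI → B → T}

lemma beta_zero (hβ : IsQBimorphism β) (a : B) : β QI.zero a = zero := by
  have h00 : QI.odot QI.zero QI.zero = QI.zero := by
    rw [QI_odot_zero_iff]
    show (0:ℚ) + 0 ≤ 1
    norm_num
  obtain ⟨h1, h2⟩ := hβ.2.2.1 QI.zero QI.zero a h00
  have h3 : QI.oplus QI.zero QI.zero = QI.zero := Subtype.ext (by
    show min ((0:ℚ)+0) 1 = 0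
    norm_num)
  rw [h3] at h2
  apply cancel (c := β QI.zero a) h1 (zero_odot _)
  rw [zerooplus, ← h2]

lemma beta_frac (hβ : IsQBimorphism β) (a : B) {q : ℕ} (hq : 1 ≤ q) :
    ∀ k, k ≤ q → ∀ x : QI, x.1 = (k:ℚ)/(q:ℚ) →
      β x a = nmul k (β (QI.div QI.one q) a) := by
  have hq0 : (0:ℚ) < (q:ℚ) := by exact_mod_cast hq
  intro k
  induction k with
  | zero =>
    intro _ x hx
    have hx0 : x = QI.zero := Subtype.ext (by
      rw [hx]
      show ((0:ℕ):ℚ)/(q:ℚ) = (0:ℚ)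
      norm_num)
    rw [hx0, beta_zero hβ a]
    rfl
  | succ k ih =>
    intro hk x hx
    have hyk1 : (0:ℚ) ≤ (k:ℚ)/(q:ℚ) := by positivity
    have hyk2 : (k:ℚ)/(q:ℚ) ≤ 1 := by
      rw [div_le_one hq0]
      exact_mod_cast Nat.le_of_succ_le hk
    set yk : QI := ⟨(k:ℚ)/(q:ℚ), hyk1, hyk2⟩ with hyk
    have hcond : QI.odot yk (QI.div QI.one q) = QI.zero := by
      rw [QI_odot_zero_iff]
      show (k:ℚ)/(q:ℚ) + (1:ℚ)/(q:ℚ) ≤ 1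
      rw [← add_div, div_le_one hq0]
      exact_mod_cast hk
    obtain ⟨_, hadd⟩ := hβ.2.2.1 yk (QI.div QI.one q) a hcond
    have hx' : QI.oplus yk (QI.div QI.one q) = x := Subtype.ext (by
      show min ((k:ℚ)/(q:ℚ) + (1:ℚ)/(q:ℚ)) 1 = x.1
      rw [hx, ← add_div]
      have hle : ((k:ℚ)+1)/(q:ℚ) ≤ 1 := by
        rw [div_le_one hq0]
        exact_mod_cast hk
      rw [min_eq_left hle]
      push_cast
      ring_nf)
    rw [← hx', hadd, ih (by omega) yk rfl]
    rfl

end MVAux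
/-- Let `B` be a semisimple MV-algebra and let `T` (a DMV-algebra),
with bimorphism `β`, be the semisimple tensor product `[0,1]_ℚ ⊗ B` (its DMV-structure
being the canonical one). For every semisimple DMV-algebra `V` and every MV-homomorphism
`f : B → U_δ(V)`, there is a unique DMV-homomorphism `f̃ : [0,1]_ℚ ⊗ B → V` with
`f̃ ∘ ι_B = f`, where `ι_B b = 1 ⊗ b`. -/
theorem universal_property_qtensor (B : Type) [MVAlgebra B] (hB : IsSemisimple B)
    (T : Type) [DMVAlgebra T] (β : QI → B → T)
    (hT : IsQTensor B T β) (hδ : DeltaCompat β)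
    (V : Type) [DMVAlgebra V] (hV : IsSemisimple V)
    (f : B → V) (hf : IsMVHom f) :
    ∃! g : T → V, IsDMVHom g ∧ ∀ b : B, g (β QI.one b) = f b := by
  obtain ⟨hTss, hβ, hUP⟩ := hT
  obtain ⟨h, hprop, huniq⟩ := hUP V hV (MVAux.gammaF f) (MVAux.gamma_bim hf)
  obtain ⟨hhom, hcomm⟩ := hprop
  have hiota : ∀ b : B, h (β QI.one b) = f b := by
    intro b
    rw [hcomm QI.one b]
    show MVAlgebra.nmul ((1:ℚ).num.toNat) (DMVAlgebra.delta ((1:ℚ).den) (f b)) = f b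
    rw [Rat.num_one, Rat.den_one]
    show MVAlgebra.nmul 1 (DMVAlgebra.delta 1 (f b)) = f b
    rw [MVAux.nmul_one', MVAux.delta_one']
  have hdelta : ∀ n, 1 ≤ n → ∀ t : T,
      h (DMVAlgebra.delta n t) = DMVAlgebra.delta n (h t) := by
    intro n hn t
    apply MVAux.delta_unique hn
    · rw [← MVAux.hom_nmul hhom, DMVAlgebra.delta_nmul n hn]
    · rw [← MVAux.hom_nmul hhom, ← MVAux.hom_odot hhom, DMVAlgebra.delta_odot n hn,
        hhom.2.2]
  refine ⟨h, ⟨⟨hhom, hdelta⟩, hiota⟩, ?_⟩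
  rintro g' ⟨⟨g'MV, g'δ⟩, g'ι⟩
  apply huniq
  refine ⟨g'MV, ?_⟩
  intro r a
  have hq := MVAux.QI_den_pos r
  have hkey : β r a =
      MVAlgebra.nmul (r.1.num.toNat) (DMVAlgebra.delta (r.1.den) (β QI.one a)) := by
    have h1 := MVAux.beta_frac hβ a hq r.1.num.toNat (MVAux.QI_num_le_den r) r
      (MVAux.QI_val_eq r).symm
    rw [h1, ← hδ r.1.den hq QI.one a]
  rw [hkey, MVAux.hom_nmul g'MV, g'δ r.1.den hq, g'ι a]
  rfl
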